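/- arXiv:2206.10479 — 8 statements merged into one kernel-verified Lean document; each statement's English description precedes it below -/
import Mathlib

section
/- The regret of policy π relative to policy ϖ under the asymmetric utility u(d; y1, y0) with parameters u_g, u_l, and common cost c equals V(ϖ) - V(π) = E[(ϖ(X) - π(X))·(u_g·τ(X) + (u_g - u_l)·e_{01}(X) - c)]. -/
open MeasureTheory

theorem stmt3 {𝓧 : Type*} [MeasurableSpace 𝓧] (ν : Measure 𝓧) [IsProbabilityMeasure ν]
    (e : Bool → Bool → 𝓧 → ℝ)
    (hpos : ∀ y1 y0 x, 0 ≤ e y1 y0 x)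
    (hsum : ∀ x, e true true x + e true false x + e false true x + e false false x = 1)
    (u : Bool → Bool → Bool → ℝ) (ug ul c : ℝ)
    (hug : 0 < ug) (hul : 0 < ul) (hc : 0 ≤ c)
    (huseful : u true true false - u false true false = ug - c)
    (hharmful : u true false true - u false false true = -ul - c)
    (hharmless : u true true true - u false true true = -c)
    (huseless : u true false false - u false false false = -c)
    (τ : 𝓧 → ℝ)
    (hτ : ∀ x, τ x = (e true true x + e true false x) - (e true true x + e false true x))
    (π ϖ : 𝓧 → ℝ) (hπ : ∀ x, π x = 0 ∨ π x = 1) (hϖ : ∀ x, ϖ x = 0 ∨ ϖ x = 1)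
    (hIntπ : Integrable (fun x => ∑ y1 : Bool, ∑ y0 : Bool,
      e y1 y0 x * (u false y1 y0 * (1 - π x) + u true y1 y0 * π x)) ν)
    (hIntϖ : Integrable (fun x => ∑ y1 : Bool, ∑ y0 : Bool,
      e y1 y0 x * (u false y1 y0 * (1 - ϖ x) + u true y1 y0 * ϖ x)) ν)
    (hIntR : Integrable (fun x =>
      (ϖ x - π x) * (ug * τ x + (ug - ul) * e false true x - c)) ν) :
    (∫ x, ∑ y1 : Bool, ∑ y0 : Bool,
        e y1 y0 x * (u false y1 y0 * (1 - ϖ x) + u true y1 y0 * ϖ x) ∂ν)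
      - (∫ x, ∑ y1 : Bool, ∑ y0 : Bool,
        e y1 y0 x * (u false y1 y0 * (1 - π x) + u true y1 y0 * π x) ∂ν)
      = ∫ x, (ϖ x - π x) * (ug * τ x + (ug - ul) * e false true x - c) ∂ν := by
  rw [← integral_sub hIntϖ hIntπ]
  refine integral_congr_ae (Filter.Eventually.of_forall fun x => ?_)
  simp only [Fintype.sum_bool]
  linear_combination (ϖ x - π x) * (e true false x) * huseful
    + (ϖ x - π x) * (e false true x) * hharmful
    + (ϖ x - π x) * (e true true x) * hharmless
    + (ϖ x - π x) * (e false false x) * huseless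
    - (ϖ x - π x) * c * (hsum x)
    - (ϖ x - π x) * ug * (hτ x)
end

section
/- For any deterministic policy π and b(x) = u_g τ(x) + (u_g - u_l) e(x) - c, with e(x) ranging over [L(x), U(x)]: the worst-case regret relative to the never-treat policy is max_{e ∈ [L,U]} E[-π(X) b(X)] = -E[π(X) L_b(X)], and relative to the always-treat policy is E[(1-π(X)) U_b(X)], where L_b(x) = min_{e∈[L(x),U(x)]} b(x) and U_b(x) = max_{e∈[L(x),U(x)]} b(x). Consequently the unconstrained minimax policies are π*_O(x) = 1{L_b(x) ≥ 0} and π*_1(x) = 1{U_b(x) ≥ 0}. -/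
open MeasureTheory Set

/-- Pointwise lower envelope of `e ↦ u_g τ(x) + (u_g - u_l) e - c` over the
Fréchet interval `[L(x), U(x)]`. -/
noncomputable def Lb {α : Type*} (ug ul c : ℝ) (τ L U : α → ℝ) (x : α) : ℝ :=
  sInf ((fun e => ug * τ x + (ug - ul) * e - c) '' Icc (L x) (U x))

/-- Pointwise upper envelope of `e ↦ u_g τ(x) + (u_g - u_l) e - c` over the
Fréchet interval `[L(x), U(x)]`. -/
noncomputable def Ub {α : Type*} (ug ul c : ℝ) (τ L U : α → ℝ) (x : α) : ℝ :=
  sSup ((fun e => ug * τ x + (ug - ul) * e - c) '' Icc (L x) (U x))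

section aux

variable {α : Type*} (ug ul c : ℝ) (τ L U : α → ℝ)

/-- minimizer selection -/
noncomputable def eLow (x : α) : ℝ := if 0 ≤ ug - ul then L x else U x
/-- maximizer selection -/
noncomputable def eHigh (x : α) : ℝ := if 0 ≤ ug - ul then U x else L x

variable {ug ul : ℝ}

lemma eLow_mem (hLU : ∀ x, L x ≤ U x) (x : α) :
    eLow ug ul L U x ∈ Icc (L x) (U x) := by
  unfold eLow; split_ifs <;> simp [hLU x]

lemma eHigh_mem (hLU : ∀ x, L x ≤ U x) (x : α) :
    eHigh ug ul L U x ∈ Icc (L x) (U x) := by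
  unfold eHigh; split_ifs <;> simp [hLU x]

lemma eLow_min {x : α} {e : ℝ} (he : e ∈ Icc (L x) (U x)) :
    ug * τ x + (ug - ul) * eLow ug ul L U x - c ≤ ug * τ x + (ug - ul) * e - c := by
  unfold eLow
  split_ifs with h
  · nlinarith [he.1]
  · nlinarith [he.2, not_le.mp h]

lemma eHigh_max {x : α} {e : ℝ} (he : e ∈ Icc (L x) (U x)) :
    ug * τ x + (ug - ul) * e - c ≤ ug * τ x + (ug - ul) * eHigh ug ul L U x - c := by
  unfold eHigh
  split_ifs with h
  · nlinarith [he.2]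
  · nlinarith [he.1, not_le.mp h]

lemma Lb_eq (hLU : ∀ x, L x ≤ U x) (x : α) :
    Lb ug ul c τ L U x = ug * τ x + (ug - ul) * eLow ug ul L U x - c := by
  apply le_antisymm
  · refine csInf_le ⟨ug * τ x + (ug - ul) * eLow ug ul L U x - c, ?_⟩
      ⟨eLow ug ul L U x, eLow_mem L U hLU x, rfl⟩
    rintro y ⟨e, he, rfl⟩; exact eLow_min c τ L U he
  · apply le_csInf ⟨_, Set.mem_image_of_mem _ (eLow_mem (ug:=ug) (ul:=ul) L U hLU x)⟩
    rintro y ⟨e, he, rfl⟩; exact eLow_min c τ L U he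

lemma Ub_eq (hLU : ∀ x, L x ≤ U x) (x : α) :
    Ub ug ul c τ L U x = ug * τ x + (ug - ul) * eHigh ug ul L U x - c := by
  apply le_antisymm
  · apply csSup_le ⟨_, Set.mem_image_of_mem _ (eHigh_mem (ug:=ug) (ul:=ul) L U hLU x)⟩
    rintro y ⟨e, he, rfl⟩; exact eHigh_max c τ L U he
  · refine le_csSup ⟨ug * τ x + (ug - ul) * eHigh ug ul L U x - c, ?_⟩
      ⟨eHigh ug ul L U x, eHigh_mem L U hLU x, rfl⟩
    rintro y ⟨e, he, rfl⟩; exact eHigh_max c τ L U he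

lemma Lb_le (hLU : ∀ x, L x ≤ U x) {x : α} {e : ℝ} (he : e ∈ Icc (L x) (U x)) :
    Lb ug ul c τ L U x ≤ ug * τ x + (ug - ul) * e - c := by
  rw [Lb_eq c τ L U hLU]; exact eLow_min c τ L U he

lemma le_Ub (hLU : ∀ x, L x ≤ U x) {x : α} {e : ℝ} (he : e ∈ Icc (L x) (U x)) :
    ug * τ x + (ug - ul) * e - c ≤ Ub ug ul c τ L U x := by
  rw [Ub_eq c τ L U hLU]; exact eHigh_max c τ L U he

end aux

theorem stmt7 {𝓧 : Type*} [MeasurableSpace 𝓧] (ν : Measure 𝓧) [IsProbabilityMeasure ν]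
    (ug ul c : ℝ) (τ L U : 𝓧 → ℝ) (hLU : ∀ x, L x ≤ U x)
    (hτi : Integrable τ ν) (hLi : Integrable L ν) (hUi : Integrable U ν)
    (hτm : Measurable τ) (hLm : Measurable L) (hUm : Measurable U)
    (π : 𝓧 → ℝ) (hπm : Measurable π) (hπ : ∀ x, π x = 0 ∨ π x = 1)
    (hLbi : Integrable (Lb ug ul c τ L U) ν) (hUbi : Integrable (Ub ug ul c τ L U) ν) :
    (⨆ e : {e : 𝓧 → ℝ // Measurable e ∧ ∀ x, e x ∈ Icc (L x) (U x)},
        ∫ x, -(π x) * (ug * τ x + (ug - ul) * e.1 x - c) ∂ν)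
      = -∫ x, π x * Lb ug ul c τ L U x ∂ν ∧
    (⨆ e : {e : 𝓧 → ℝ // Measurable e ∧ ∀ x, e x ∈ Icc (L x) (U x)},
        ∫ x, (1 - π x) * (ug * τ x + (ug - ul) * e.1 x - c) ∂ν)
      = ∫ x, (1 - π x) * Ub ug ul c τ L U x ∂ν ∧
    (∀ π' : 𝓧 → ℝ, Measurable π' → (∀ x, π' x = 0 ∨ π' x = 1) →
      -∫ x, (if 0 ≤ Lb ug ul c τ L U x then (1:ℝ) else 0) * Lb ug ul c τ L U x ∂ν
        ≤ -∫ x, π' x * Lb ug ul c τ L U x ∂ν) ∧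
    (∀ π' : 𝓧 → ℝ, Measurable π' → (∀ x, π' x = 0 ∨ π' x = 1) →
      ∫ x, (1 - (if 0 ≤ Ub ug ul c τ L U x then (1:ℝ) else 0)) * Ub ug ul c τ L U x ∂ν
        ≤ ∫ x, (1 - π' x) * Ub ug ul c τ L U x ∂ν) := by
  -- generic integrability of selections
  have hei : ∀ e : 𝓧 → ℝ, Measurable e → (∀ x, e x ∈ Icc (L x) (U x)) →
      Integrable e ν := by
    intro e hm hb
    refine Integrable.mono' (hLi.abs.add hUi.abs) hm.aestronglyMeasurable
      (Filter.Eventually.of_forall fun x => ?_)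
    have h1 := (hb x).1; have h2 := (hb x).2
    simp only [Pi.add_apply]
    rw [Real.norm_eq_abs, abs_le]
    constructor
    · have : -(|L x|) ≤ L x := neg_abs_le _
      have : 0 ≤ |U x| := abs_nonneg _
      linarith
    · have : U x ≤ |U x| := le_abs_self _
      have : 0 ≤ |L x| := abs_nonneg _
      linarith
  have hbi : ∀ e : 𝓧 → ℝ, Integrable e ν →
      Integrable (fun x => ug * τ x + (ug - ul) * e x - c) ν := fun e hi =>
    ((hτi.const_mul ug).add (hi.const_mul (ug - ul))).sub (integrable_const c)
  have hmul : ∀ (g h : 𝓧 → ℝ), AEStronglyMeasurable g ν → (∀ x, ‖g x‖ ≤ 1) →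
      Integrable h ν → Integrable (fun x => g x * h x) ν := fun g h hgm hgb hhi =>
    hhi.bdd_mul (c := 1) hgm (Filter.Eventually.of_forall hgb)
  have hπ01 : ∀ x, ‖π x‖ ≤ 1 := by
    intro x; rcases hπ x with h | h <;> simp [h]
  have h1π01 : ∀ x, ‖1 - π x‖ ≤ 1 := by
    intro x; rcases hπ x with h | h <;> simp [h]
  -- the extremal selections as subtype elements
  have heLm : Measurable (eLow ug ul L U) := by
    unfold eLow; split <;> assumption
  have heHm : Measurable (eHigh ug ul L U) := by
    unfold eHigh; split <;> assumption
  set 𝓔 := {e : 𝓧 → ℝ // Measurable e ∧ ∀ x, e x ∈ Icc (L x) (U x)}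
  have heL2 : ∀ x, eLow ug ul L U x ∈ Icc (L x) (U x) :=
    eLow_mem (ug:=ug) (ul:=ul) L U hLU
  have heH2 : ∀ x, eHigh ug ul L U x ∈ Icc (L x) (U x) :=
    eHigh_mem (ug:=ug) (ul:=ul) L U hLU
  haveI : Nonempty 𝓔 := ⟨⟨eHigh ug ul L U, heHm, heH2⟩⟩
  have hbint : ∀ e : 𝓔, Integrable (fun x => ug * τ x + (ug - ul) * e.1 x - c) ν :=
    fun e => hbi _ (hei _ e.2.1 e.2.2)
  refine ⟨?_, ?_, ?_, ?_⟩
  · -- part 1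
    rw [← integral_neg]
    apply le_antisymm
    · apply ciSup_le
      intro e
      apply integral_mono ((hmul _ _ (hπm.neg).aestronglyMeasurable
          (by intro x; rw [Pi.neg_apply, norm_neg]; exact hπ01 x) (hbint e)))
        (by simpa using (hmul _ _ (hπm.neg).aestronglyMeasurable
          (by intro x; rw [Pi.neg_apply, norm_neg]; exact hπ01 x) hLbi))
      intro x
      have hb := Lb_le (ug:=ug) (ul:=ul) c τ L U hLU (e.2.2 x)
      have hp : 0 ≤ π x := by rcases hπ x with h | h <;> simp [h]
      simp only [Pi.neg_apply, neg_mul, neg_le_neg_iff]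
      exact mul_le_mul_of_nonneg_left hb hp
    · refine le_trans (le_of_eq ?_)
        (le_ciSup (f := fun e : 𝓔 =>
            ∫ x, -(π x) * (ug * τ x + (ug - ul) * e.1 x - c) ∂ν)
          ⟨∫ x, -(π x * Lb ug ul c τ L U x) ∂ν, ?_⟩
          ⟨eLow ug ul L U, heLm, heL2⟩)
      · apply integral_congr_ae
        filter_upwards with x
        rw [Lb_eq c τ L U hLU x]; ring_nf
      rintro y ⟨e, rfl⟩
      apply integral_mono ((hmul _ _ (hπm.neg).aestronglyMeasurable
          (by intro x; rw [Pi.neg_apply, norm_neg]; exact hπ01 x) (hbint e)))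
        (by simpa using (hmul _ _ (hπm.neg).aestronglyMeasurable
          (by intro x; rw [Pi.neg_apply, norm_neg]; exact hπ01 x) hLbi))
      intro x
      have hb := Lb_le (ug:=ug) (ul:=ul) c τ L U hLU (e.2.2 x)
      have hp : 0 ≤ π x := by rcases hπ x with h | h <;> simp [h]
      simp only [Pi.neg_apply, neg_mul, neg_le_neg_iff]
      exact mul_le_mul_of_nonneg_left hb hp
  · -- part 2
    apply le_antisymm
    · apply ciSup_le
      intro e
      apply integral_mono (hmul _ _ ((measurable_const.sub hπm).aestronglyMeasurable)
          h1π01 (hbint e)) (hmul _ _ ((measurable_const.sub hπm).aestronglyMeasurable)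
          h1π01 hUbi)
      intro x
      have hb := le_Ub (ug:=ug) (ul:=ul) c τ L U hLU (e.2.2 x)
      have hp : 0 ≤ 1 - π x := by rcases hπ x with h | h <;> simp [h]
      exact mul_le_mul_of_nonneg_left hb hp
    · refine le_trans (le_of_eq ?_)
        (le_ciSup (f := fun e : 𝓔 =>
            ∫ x, (1 - π x) * (ug * τ x + (ug - ul) * e.1 x - c) ∂ν)
          ⟨∫ x, (1 - π x) * Ub ug ul c τ L U x ∂ν, ?_⟩
          ⟨eHigh ug ul L U, heHm, heH2⟩)
      · apply integral_congr_ae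
        filter_upwards with x
        rw [Ub_eq c τ L U hLU x]
      rintro y ⟨e, rfl⟩
      apply integral_mono (hmul _ _ ((measurable_const.sub hπm).aestronglyMeasurable)
          h1π01 (hbint e)) (hmul _ _ ((measurable_const.sub hπm).aestronglyMeasurable)
          h1π01 hUbi)
      intro x
      have hb := le_Ub (ug:=ug) (ul:=ul) c τ L U hLU (e.2.2 x)
      have hp : 0 ≤ 1 - π x := by rcases hπ x with h | h <;> simp [h]
      exact mul_le_mul_of_nonneg_left hb hp
  · -- part 3
    intro π' hπ'm hπ'
    rw [neg_le_neg_iff]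
    have hπ'01 : ∀ x, ‖π' x‖ ≤ 1 := by
      intro x; rcases hπ' x with h | h <;> simp [h]
    have hLbm : Measurable (Lb ug ul c τ L U) := by
      have he : Lb ug ul c τ L U
          = fun x => ug * τ x + (ug - ul) * eLow ug ul L U x - c :=
        funext fun x => Lb_eq c τ L U hLU x
      rw [he]; fun_prop
    have hIm : Measurable (fun x => if 0 ≤ Lb ug ul c τ L U x then (1:ℝ) else 0) :=
      Measurable.ite (measurableSet_le measurable_const hLbm) measurable_const
        measurable_const
    apply integral_mono (hmul _ _ hπ'm.aestronglyMeasurable hπ'01 hLbi)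
      (hmul _ _ hIm.aestronglyMeasurable (by intro x; split <;> simp) hLbi)
    intro x
    by_cases h : 0 ≤ Lb ug ul c τ L U x
    · simp only [h, if_pos]
      rcases hπ' x with hh | hh <;> simp [hh, h]
    · simp only [h, if_neg, not_false_iff, zero_mul]
      rcases hπ' x with hh | hh <;> [simp [hh]; nlinarith [not_le.mp h]]
  · -- part 4
    intro π' hπ'm hπ'
    have hπ'01 : ∀ x, ‖1 - π' x‖ ≤ 1 := by
      intro x; rcases hπ' x with h | h <;> simp [h]
    have hIm : Measurable (fun x => (1:ℝ) - if 0 ≤ Ub ug ul c τ L U x then (1:ℝ) else 0) := by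
      have hu : Measurable (Ub ug ul c τ L U) := by
        have he : Ub ug ul c τ L U
            = fun x => ug * τ x + (ug - ul) * eHigh ug ul L U x - c :=
          funext fun x => Ub_eq c τ L U hLU x
        rw [he]; fun_prop
      exact measurable_const.sub (Measurable.ite (measurableSet_le measurable_const hu)
        measurable_const measurable_const)
    apply integral_mono (hmul _ _ hIm.aestronglyMeasurable
        (by intro x; split <;> simp) hUbi)
      (hmul _ _ ((measurable_const.sub hπ'm).aestronglyMeasurable) hπ'01 hUbi)
    intro x
    by_cases h : 0 ≤ Ub ug ul c τ L U x
    · simp only [h, if_pos, sub_self, zero_mul]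
      rcases hπ' x with hh | hh <;> simp [hh, h]
    · simp only [h, if_neg, not_false_iff, sub_zero, Pi.sub_apply]
      rcases hπ' x with hh | hh <;> [simp [hh]; nlinarith [not_le.mp h]]
end

section
/- If u_g ≥ u_l, then U_b(x) = max_{e∈[L(x),U(x)]}(u_g τ(x) + (u_g-u_l)e - c) = (u_g - (u_g-u_l)δ_+(x))m(1,x) - (u_l + (u_g-u_l)δ_+(x))m(0,x) + (u_g-u_l)δ_+(x) - c, where U(x) = min{m(0,x), 1-m(1,x)} and δ_+(x) = 1{m(0,x)+m(1,x)-1 ≥ 0}. -/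
theorem stmt9 (ug ul c m0 m1 : ℝ) (h : ul ≤ ug) (hul : 0 < ul) (hc : 0 ≤ c)
    (hm0 : m0 ∈ Set.Icc (0:ℝ) 1) (hm1 : m1 ∈ Set.Icc (0:ℝ) 1) :
    sSup ((fun e => ug * (m1 - m0) + (ug - ul) * e - c) ''
        Set.Icc (max 0 (-(m1 - m0))) (min m0 (1 - m1)))
      = (ug - (ug - ul) * (if 0 ≤ m0 + m1 - 1 then (1:ℝ) else 0)) * m1
        - (ul + (ug - ul) * (if 0 ≤ m0 + m1 - 1 then (1:ℝ) else 0)) * m0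
        + (ug - ul) * (if 0 ≤ m0 + m1 - 1 then (1:ℝ) else 0) - c := by
  obtain ⟨h0, h0'⟩ := hm0
  obtain ⟨h1, h1'⟩ := hm1
  apply IsGreatest.csSup_eq
  constructor
  · refine ⟨min m0 (1 - m1), ⟨?_, le_refl _⟩, ?_⟩
    · apply max_le
      · exact le_min h0 (by linarith)
      · exact le_min (by linarith) (by linarith)
    · split_ifs with hd
      · rw [min_eq_right (by linarith)]; ring
      · rw [min_eq_left (by linarith)]; ring
  · rintro y ⟨e, ⟨heL, heU⟩, rfl⟩
    obtain ⟨hxa, hxb⟩ := le_min_iff.mp heU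
    simp only at *
    split_ifs with hd
    · nlinarith [mul_nonneg (sub_nonneg.mpr h) (sub_nonneg.mpr hxb)]
    · nlinarith [mul_nonneg (sub_nonneg.mpr h) (sub_nonneg.mpr hxa)]
end

section
/- If u_g ≥ u_l, the policy minimizing the worst-case regret relative to the never-treat policy is the symmetric policy: π*_O(x) = 1{u_g τ(x) ≥ c}. If u_g < u_l, then π*_O(x) = 1{u_g m(1,x) ≥ u_l m(0,x) + c} when δ_+(x)=0, and π*_O(x) = 1{u_l m(1,x) ≥ u_g m(0,x) + u_l - u_g + c} when δ_+(x)=1. -/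
open MeasureTheory Set

lemma affine_sInf (a s c l u : ℝ) (hlu : l ≤ u) :
    sInf ((fun e => a + s * e - c) '' Icc l u)
      = if 0 ≤ s then a + s * l - c else a + s * u - c := by
  split_ifs with hs
  · refine IsLeast.csInf_eq ⟨⟨l, ⟨le_refl l, hlu⟩, rfl⟩, ?_⟩
    rintro y ⟨e, he, rfl⟩
    show a + s * l - c ≤ a + s * e - c
    nlinarith [he.1]
  · push_neg at hs
    refine IsLeast.csInf_eq ⟨⟨u, ⟨hlu, le_refl u⟩, rfl⟩, ?_⟩
    rintro y ⟨e, he, rfl⟩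
    show a + s * u - c ≤ a + s * e - c
    nlinarith [he.2]

theorem stmt10 {𝓧 : Type*} [MeasurableSpace 𝓧] (ν : Measure 𝓧) [IsProbabilityMeasure ν]
    (ug ul c : ℝ) (hug : 0 < ug) (hul : 0 < ul) (hc : 0 ≤ c)
    (m0 m1 : 𝓧 → ℝ) (hm0 : ∀ x, m0 x ∈ Icc (0:ℝ) 1) (hm1 : ∀ x, m1 x ∈ Icc (0:ℝ) 1)
    (τ L U : 𝓧 → ℝ) (hτ : ∀ x, τ x = m1 x - m0 x)
    (hL : ∀ x, L x = max 0 (-τ x)) (hU : ∀ x, U x = min (m0 x) (1 - m1 x))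
    (πstar : 𝓧 → ℝ)
    (hπstar : ∀ x, πstar x = if 0 ≤ Lb ug ul c τ L U x then 1 else 0)
    (hstarInt : Integrable (fun x => πstar x * Lb ug ul c τ L U x) ν) :
    (ul ≤ ug → ∀ x, πstar x = if c ≤ ug * τ x then 1 else 0) ∧
    (ug < ul → ∀ x, πstar x =
      if m0 x + m1 x < 1 then (if ul * m0 x + c ≤ ug * m1 x then 1 else 0)
      else (if ug * m0 x + (ul - ug) + c ≤ ul * m1 x then 1 else 0)) ∧
    (∀ π : 𝓧 → ℝ, (∀ x, π x = 0 ∨ π x = 1) →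
      Integrable (fun x => π x * Lb ug ul c τ L U x) ν →
      -∫ x, πstar x * Lb ug ul c τ L U x ∂ν ≤ -∫ x, π x * Lb ug ul c τ L U x ∂ν) := by
  have hLU : ∀ x, L x ≤ U x := by
    intro x
    have h0 := hm0 x; have h1 := hm1 x
    rw [hL x, hU x, hτ x]
    refine max_le (le_min h0.1 (by linarith [h1.2]))
      (le_min (by linarith [h1.1]) (by linarith [h0.2]))
  have hLbEq : ∀ x, Lb ug ul c τ L U x
      = if 0 ≤ ug - ul then ug * τ x + (ug - ul) * L x - c
        else ug * τ x + (ug - ul) * U x - c := by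
    intro x
    exact affine_sInf (ug * τ x) (ug - ul) c (L x) (U x) (hLU x)
  refine ⟨?_, ?_, ?_⟩
  · intro hugl x
    have hs : (0:ℝ) ≤ ug - ul := by linarith
    rw [hπstar x, hLbEq x, if_pos hs, hL x]
    rcases le_or_gt 0 (τ x) with ht | ht
    · rw [max_eq_left (by linarith)]
      split_ifs with h1 h2 h2 <;> first | rfl | (exact absurd (by linarith) h2) |
        (exact absurd (by linarith) h1)
    · rw [max_eq_right (by linarith)]
      split_ifs with h1 h2 h2 <;> first | rfl | nlinarith
  · intro hugl x
    have hs : ¬ (0:ℝ) ≤ ug - ul := by push_neg; linarith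
    rw [hπstar x, hLbEq x, if_neg hs, hτ x, hU x]
    have h0 := hm0 x; have h1 := hm1 x
    rcases lt_or_ge (m0 x + m1 x) 1 with hd | hd
    · rw [if_pos hd, min_eq_left (by linarith)]
      split_ifs with h2 h3 h3 <;> first | rfl | (exact absurd (by nlinarith) h3) |
        (exact absurd (by nlinarith) h2)
    · rw [if_neg (not_lt.mpr hd), min_eq_right (by linarith)]
      split_ifs with h2 h3 h3 <;> first | rfl | (exact absurd (by nlinarith) h3) |
        (exact absurd (by nlinarith) h2)
  · intro π hπ hπInt
    have key : ∀ x, π x * Lb ug ul c τ L U x ≤ πstar x * Lb ug ul c τ L U x := by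
      intro x
      rw [hπstar x]
      rcases hπ x with h | h <;> rw [h] <;> split_ifs with hn <;>
        simp only [one_mul, zero_mul] <;> nlinarith
    exact neg_le_neg (integral_mono hπInt hstarInt key)
end

section
/- If u_g < u_l, the policy minimizing the worst-case regret relative to the always-treat policy is the symmetric policy π*_1(x) = 1{u_g τ(x) ≥ c}. If u_g ≥ u_l, then π*_1(x) = 1{u_g m(1,x) ≥ u_l m(0,x)} when δ_+(x)=0 (with c=0 in the threshold), and π*_1(x) = 1{u_l m(1,x) ≥ u_g m(0,x) + u_l - u_g + c} when δ_+(x)=1. -/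
open MeasureTheory Set

theorem stmt11 {𝓧 : Type*} [MeasurableSpace 𝓧] (ν : Measure 𝓧) [IsProbabilityMeasure ν]
    (ug ul c : ℝ) (hug : 0 < ug) (hul : 0 < ul) (hc : 0 ≤ c)
    (m0 m1 : 𝓧 → ℝ) (hm0 : ∀ x, m0 x ∈ Icc (0:ℝ) 1) (hm1 : ∀ x, m1 x ∈ Icc (0:ℝ) 1)
    (τ L U : 𝓧 → ℝ) (hτ : ∀ x, τ x = m1 x - m0 x)
    (hL : ∀ x, L x = max 0 (-τ x)) (hU : ∀ x, U x = min (m0 x) (1 - m1 x))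
    (πstar : 𝓧 → ℝ)
    (hπstar : ∀ x, πstar x = if 0 ≤ Ub ug ul c τ L U x then 1 else 0)
    (hstarInt : Integrable (fun x => (1 - πstar x) * Ub ug ul c τ L U x) ν) :
    (ug < ul → ∀ x, πstar x = if c ≤ ug * τ x then 1 else 0) ∧
    (ul ≤ ug → ∀ x,
      (m0 x + m1 x < 1 → c = 0 → πstar x = if ul * m0 x ≤ ug * m1 x then 1 else 0) ∧
      (1 ≤ m0 x + m1 x →
        πstar x = if ug * m0 x + (ul - ug) + c ≤ ul * m1 x then 1 else 0)) ∧
    (∀ π : 𝓧 → ℝ, (∀ x, π x = 0 ∨ π x = 1) →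
      Integrable (fun x => (1 - π x) * Ub ug ul c τ L U x) ν →
      ∫ x, (1 - πstar x) * Ub ug ul c τ L U x ∂ν
        ≤ ∫ x, (1 - π x) * Ub ug ul c τ L U x ∂ν) := by
  -- L ≤ U pointwise
  have hLU : ∀ x, L x ≤ U x := by
    intro x
    have h0 := hm0 x; have h1 := hm1 x
    rw [hL, hU, hτ]
    rcases h0 with ⟨h0a, h0b⟩; rcases h1 with ⟨h1a, h1b⟩
    refine le_min (max_le ?_ ?_) (max_le ?_ ?_) <;> nlinarith
  -- closed form of Ub
  have hUb : ∀ x, Ub ug ul c τ L U x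
      = ug * τ x + (ug - ul) * (if ul ≤ ug then U x else L x) - c := by
    intro x
    apply IsGreatest.csSup_eq
    constructor
    · refine ⟨if ul ≤ ug then U x else L x, ?_, rfl⟩
      split <;> exact ⟨by simp [hLU x], by simp [hLU x]⟩
    · rintro y ⟨e, ⟨he1, he2⟩, rfl⟩
      dsimp only
      split_ifs with h
      · nlinarith
      · nlinarith [le_of_not_ge h]
  refine ⟨?_, ?_, ?_⟩
  · intro hlt x
    rw [hπstar x, hUb x, if_neg (not_le.mpr hlt), hL x]
    rcases le_or_gt 0 (τ x) with ht | ht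
    · rw [max_eq_left (by linarith)]
      ring_nf
      congr 1
      first | rw [eq_iff_iff] | skip
      first | rw [eq_iff_iff] | skip
      constructor <;> intro h <;> linarith
    · rw [max_eq_right (by linarith)]
      have h1 : ¬ (0 ≤ ug * τ x + (ug - ul) * -τ x - c) := by nlinarith
      have h2 : ¬ (c ≤ ug * τ x) := by nlinarith
      rw [if_neg h1, if_neg h2]
  · intro hge x
    constructor
    · intro hs hc0
      rw [hπstar x, hUb x, if_pos hge, hU x, hτ x,
        min_eq_left (by linarith), hc0]
      congr 1
      first | rw [eq_iff_iff] | skip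
      constructor <;> intro h <;> nlinarith
    · intro hs
      rw [hπstar x, hUb x, if_pos hge, hU x, hτ x,
        min_eq_right (by linarith)]
      congr 1
      first | rw [eq_iff_iff] | skip
      constructor <;> intro h <;> nlinarith
  · intro π hπ hInt
    apply integral_mono hstarInt hInt
    intro x
    dsimp only
    have hb := hUb x
    rcases le_or_gt 0 (Ub ug ul c τ L U x) with h | h
    · rw [hπstar x, if_pos h]
      simp only [sub_self, zero_mul]
      rcases hπ x with h0 | h0 <;> rw [h0] <;> simp [h]
    · rw [hπstar x, if_neg (not_le.mpr h)]
      rcases hπ x with h0 | h0 <;> rw [h0] <;> simp [le_of_lt h]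
end

section
/- The unconstrained minimizer of the worst-case regret relative to the oracle, π*_o = argmin_π E[sup_{b(X)∈[L_b(X),U_b(X)]}(π^o(X)-π(X))b(X)], is given pointwise by: π*_o(x) = 1 if L_b(x) ≥ 0; π*_o(x) = 0 if U_b(x) < 0; and π*_o(x) = 1{U_b(x) ≥ -L_b(x)} if L_b(x) < 0 ≤ U_b(x). -/
open MeasureTheory

lemma supP (L U p : ℝ) (h : L ≤ U) (hp : p = 0 ∨ p = 1) :
    sSup {r : ℝ | ∃ b ∈ Set.Icc L U, r = ((if 0 ≤ b then (1:ℝ) else 0) - p) * b}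
      = if p = 1 then max (-L) 0 else max U 0 := by
  rcases hp with rfl | rfl
  · rw [if_neg (by norm_num : (0:ℝ) ≠ 1)]
    have hub : ∀ r ∈ {r : ℝ | ∃ b ∈ Set.Icc L U,
        r = ((if 0 ≤ b then (1:ℝ) else 0) - 0) * b}, r ≤ max U 0 := by
      rintro r ⟨b, hb, rfl⟩
      by_cases hb0 : 0 ≤ b
      · rw [if_pos hb0]
        have : b ≤ U := hb.2
        calc (1 - 0) * b = b := by ring
        _ ≤ U := this
        _ ≤ max U 0 := le_max_left _ _
      · rw [if_neg hb0]
        calc (0 - 0) * b = 0 := by ring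
        _ ≤ max U 0 := le_max_right _ _
    apply le_antisymm
    · exact csSup_le ⟨_, L, ⟨le_rfl, h⟩, rfl⟩ hub
    · apply le_csSup ⟨max U 0, hub⟩
      by_cases hU : 0 ≤ U
      · exact ⟨U, ⟨h, le_rfl⟩, by rw [if_pos hU, max_eq_left hU]; ring⟩
      · refine ⟨L, ⟨le_rfl, h⟩, ?_⟩
        rw [if_neg (show ¬ 0 ≤ L by push_neg at hU ⊢; linarith),
          max_eq_right (le_of_not_ge hU)]
        ring
  · rw [if_pos rfl]
    have hub : ∀ r ∈ {r : ℝ | ∃ b ∈ Set.Icc L U,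
        r = ((if 0 ≤ b then (1:ℝ) else 0) - 1) * b}, r ≤ max (-L) 0 := by
      rintro r ⟨b, hb, rfl⟩
      by_cases hb0 : 0 ≤ b
      · rw [if_pos hb0]
        calc (1 - 1) * b = 0 := by ring
        _ ≤ max (-L) 0 := le_max_right _ _
      · rw [if_neg hb0]
        have : L ≤ b := hb.1
        calc (0 - 1) * b = -b := by ring
        _ ≤ -L := by linarith
        _ ≤ max (-L) 0 := le_max_left _ _
    apply le_antisymm
    · exact csSup_le ⟨_, L, ⟨le_rfl, h⟩, rfl⟩ hub
    · apply le_csSup ⟨max (-L) 0, hub⟩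
      by_cases hL : 0 ≤ L
      · refine ⟨L, ⟨le_rfl, h⟩, ?_⟩
        rw [if_pos hL, max_eq_right (by linarith : -L ≤ 0)]
        ring
      · refine ⟨L, ⟨le_rfl, h⟩, ?_⟩
        rw [if_neg hL, max_eq_left (by push_neg at hL; linarith : (0:ℝ) ≤ -L)]
        ring

theorem stmt14 {𝓧 : Type*} [MeasurableSpace 𝓧] (ν : Measure 𝓧) [IsProbabilityMeasure ν]
    (Lb Ub : 𝓧 → ℝ) (hLU : ∀ x, Lb x ≤ Ub x)
    (hbdd : ∃ M : ℝ, ∀ x, |Lb x| ≤ M ∧ |Ub x| ≤ M)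
    (WR : (𝓧 → ℝ) → 𝓧 → ℝ)
    (hWR : ∀ π x, WR π x = sSup {r : ℝ | ∃ b ∈ Set.Icc (Lb x) (Ub x),
        r = ((if 0 ≤ b then (1:ℝ) else 0) - π x) * b})
    (πstar : 𝓧 → ℝ)
    (hπstar : ∀ x, πstar x =
      if 0 ≤ Lb x then 1 else if Ub x < 0 then 0 else (if -Lb x ≤ Ub x then 1 else 0))
    (hstarInt : Integrable (WR πstar) ν) :
    (∀ x, 0 ≤ Lb x → πstar x = 1) ∧
    (∀ x, Ub x < 0 → πstar x = 0) ∧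
    (∀ x, Lb x < 0 → 0 ≤ Ub x → πstar x = if -Lb x ≤ Ub x then 1 else 0) ∧
    (∀ π : 𝓧 → ℝ, (∀ x, π x = 0 ∨ π x = 1) → Integrable (WR π) ν →
      ∫ x, WR πstar x ∂ν ≤ ∫ x, WR π x ∂ν) := by
  have hπs01 : ∀ x, πstar x = 0 ∨ πstar x = 1 := by
    intro x
    rw [hπstar x]
    split_ifs <;> simp
  have hval : ∀ (π : 𝓧 → ℝ) (x : 𝓧), (π x = 0 ∨ π x = 1) →
      WR π x = if π x = 1 then max (-Lb x) 0 else max (Ub x) 0 := by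
    intro π x hp
    rw [hWR π x, supP _ _ _ (hLU x) hp]
  refine ⟨?_, ?_, ?_, ?_⟩
  · intro x hx; rw [hπstar x, if_pos hx]
  · intro x hx
    have := hLU x
    rw [hπstar x, if_neg (by linarith : ¬ 0 ≤ Lb x), if_pos hx]
  · intro x hL hU
    rw [hπstar x, if_neg (by linarith : ¬ 0 ≤ Lb x), if_neg (by linarith : ¬ Ub x < 0)]
  · intro π hπ hInt
    apply integral_mono hstarInt hInt
    intro x
    rw [hval πstar x (hπs01 x), hval π x (hπ x)]
    have hmin : (if πstar x = 1 then max (-Lb x) 0 else max (Ub x) 0)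
        = min (max (-Lb x) 0) (max (Ub x) 0) := by
      rw [hπstar x]
      by_cases h1 : 0 ≤ Lb x
      · rw [if_pos h1]
        rw [if_pos rfl, max_eq_right (by linarith : -Lb x ≤ 0),
          min_eq_left (le_max_right _ _)]
      · rw [if_neg h1]
        by_cases h2 : Ub x < 0
        · rw [if_pos h2]
          rw [if_neg (by norm_num : (0:ℝ) ≠ 1),
            max_eq_right (le_of_lt h2),
            min_eq_right (le_max_right _ _)]
        · push_neg at h1 h2
          rw [if_neg (by linarith : ¬ Ub x < 0)]
          by_cases h3 : -Lb x ≤ Ub x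
          · rw [if_pos h3, if_pos rfl,
              max_eq_left (by linarith : (0:ℝ) ≤ -Lb x),
              max_eq_left h2,
              min_eq_left h3]
          · push_neg at h3
            rw [if_neg (by linarith : ¬ -Lb x ≤ Ub x), if_neg (by norm_num : (0:ℝ) ≠ 1),
              max_eq_left h2,
              max_eq_left (by linarith : (0:ℝ) ≤ -Lb x),
              min_eq_right (le_of_lt h3)]
    rw [hmin]
    by_cases hp1 : π x = 1
    · rw [if_pos hp1]; exact min_le_left _ _
    · rw [if_neg hp1]; exact min_le_right _ _
end

section
/- With c = 0 and u_g ≥ u_l, in the intermediate region where δ_τ(x) = 0 and π*_1(x) = 1, the minimax-regret policy relative to the oracle treats if and only if: (u_g+u_l) m(1,x) ≥ 2u_l m(0,x) when δ_+(x) = 0, and 2u_l m(1,x) ≥ (u_g+u_l) m(0,x) + (u_l - u_g) when δ_+(x) = 1. This follows from the condition U_b(x) ≥ -L_b(x) with the explicit formulas for L_b and U_b. -/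
theorem stmt15 (ug ul m0 m1 : ℝ) (h : ul ≤ ug) (hul : 0 < ul)
    (hm0 : m0 ∈ Set.Icc (0:ℝ) 1) (hm1 : m1 ∈ Set.Icc (0:ℝ) 1)
    (τ δτ δp Lb Ub : ℝ) (hτ : τ = m1 - m0)
    (hδτ : δτ = if 0 ≤ τ then 1 else 0)
    (hδp : δp = if 1 ≤ m0 + m1 then 1 else 0)
    (hLb : Lb = (ul + (ug - ul) * δτ) * τ)
    (hUb : Ub = (ug - (ug - ul) * δp) * m1 - (ul + (ug - ul) * δp) * m0 + (ug - ul) * δp)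
    (hneg : δτ = 0) (hint : 0 ≤ Ub) :
    (m0 + m1 < 1 → ((-Lb ≤ Ub) ↔ 2 * ul * m0 ≤ (ug + ul) * m1)) ∧
    (1 ≤ m0 + m1 → ((-Lb ≤ Ub) ↔ (ug + ul) * m0 + (ul - ug) ≤ 2 * ul * m1)) := by
  subst hτ hδp hLb hUb
  constructor
  · intro hlt
    rw [if_neg (by linarith)]
    rw [hneg]
    constructor <;> intro hh <;> nlinarith
  · intro hge
    rw [if_pos hge, hneg]
    constructor <;> intro hh <;> nlinarith
end

section
/- The worst-case (over principal scores in the Fréchet interval) probability that policy π gives a harmful treatment is sup P(Y(π(X))<Y(0)) = E[π(X)(m(0,X) + δ_+(X)(1 - m(1,X) - m(0,X)))], and the worst-case probability of failing to give a useful treatment is sup P(Y(π(X))<Y(1)) = E[(1-π(X))(m(1,X) + δ_+(X)(1 - m(1,X) - m(0,X)))]. -/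
open MeasureTheory Set

theorem stmt17 {𝓧 : Type*} [MeasurableSpace 𝓧] (ν : Measure 𝓧) [IsProbabilityMeasure ν]
    (m0 m1 : 𝓧 → ℝ) (hm0m : Measurable m0) (hm1m : Measurable m1)
    (hm0 : ∀ x, m0 x ∈ Icc (0:ℝ) 1) (hm1 : ∀ x, m1 x ∈ Icc (0:ℝ) 1)
    (hm0i : Integrable m0 ν) (hm1i : Integrable m1 ν)
    (τ δp : 𝓧 → ℝ) (hτ : ∀ x, τ x = m1 x - m0 x)
    (hδp : ∀ x, δp x = if 0 ≤ m0 x + m1 x - 1 then 1 else 0)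
    (π : 𝓧 → ℝ) (hπm : Measurable π) (hπ : ∀ x, π x = 0 ∨ π x = 1) :
    (⨆ e : {e : 𝓧 → ℝ // Measurable e ∧ ∀ x,
        e x ∈ Icc (max 0 (-τ x)) (min (m0 x) (1 - m1 x))},
      ∫ x, π x * e.1 x ∂ν)
      = ∫ x, π x * (m0 x + δp x * (1 - m1 x - m0 x)) ∂ν ∧
    (⨆ e : {e : 𝓧 → ℝ // Measurable e ∧ ∀ x,
        e x ∈ Icc (max 0 (-τ x)) (min (m0 x) (1 - m1 x))},
      ∫ x, (1 - π x) * (τ x + e.1 x) ∂ν)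
      = ∫ x, (1 - π x) * (m1 x + δp x * (1 - m1 x - m0 x)) ∂ν := by
  classical
  set U : 𝓧 → ℝ := fun x => min (m0 x) (1 - m1 x) with hUdef
  have hUm : Measurable U := hm0m.min (measurable_const.sub hm1m)
  have hUmem : ∀ x, U x ∈ Icc (max 0 (-τ x)) (min (m0 x) (1 - m1 x)) := by
    intro x
    refine ⟨max_le (le_min (hm0 x).1 (by linarith [(hm1 x).2])) ?_, le_rfl⟩
    rw [hτ]
    exact le_min (by linarith [(hm1 x).1]) (by linarith [(hm0 x).2])
  have hUeq : ∀ x, U x = m0 x + δp x * (1 - m1 x - m0 x) := by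
    intro x
    rw [hδp]
    split_ifs with h
    · rw [show U x = 1 - m1 x from min_eq_right (by linarith)]; ring
    · rw [show U x = m0 x from min_eq_left (by linarith)]; ring
  have hπ01 : ∀ x, 0 ≤ π x ∧ π x ≤ 1 := by
    intro x; rcases hπ x with h | h <;> rw [h] <;> norm_num
  have he01 : ∀ (e : {e : 𝓧 → ℝ // Measurable e ∧ ∀ x,
      e x ∈ Icc (max 0 (-τ x)) (min (m0 x) (1 - m1 x))}) (x : 𝓧),
      0 ≤ e.1 x ∧ e.1 x ≤ 1 := by
    intro e x
    have h1 := (e.2.2 x).1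
    have h2 := (e.2.2 x).2
    have := le_max_left (0:ℝ) (-τ x)
    have := min_le_left (m0 x) (1 - m1 x)
    exact ⟨le_trans (le_max_left 0 (-τ x)) h1,
      le_trans h2 (le_trans (min_le_left _ _) (hm0 x).2)⟩
  have hint : ∀ (f : 𝓧 → ℝ), Measurable f → (∀ x, |f x| ≤ 2) → Integrable f ν := by
    intro f hf hb
    exact (integrable_const (2:ℝ)).mono' hf.aestronglyMeasurable (ae_of_all _ hb)
  have hτb : ∀ x, |τ x| ≤ 1 := by
    intro x; rw [hτ, abs_le]
    constructor <;> [linarith [(hm1 x).1, (hm0 x).2]; linarith [(hm1 x).2, (hm0 x).1]]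
  -- integrability of the integrands
  have hint1 : ∀ (e : {e : 𝓧 → ℝ // Measurable e ∧ ∀ x,
      e x ∈ Icc (max 0 (-τ x)) (min (m0 x) (1 - m1 x))}),
      Integrable (fun x => π x * e.1 x) ν := by
    intro e
    refine hint _ (hπm.mul e.2.1) (fun x => ?_)
    have h1 := hπ01 x; have h2 := he01 e x
    rw [abs_mul, abs_of_nonneg h1.1, abs_of_nonneg h2.1]
    nlinarith
  have hint2 : ∀ (e : {e : 𝓧 → ℝ // Measurable e ∧ ∀ x,
      e x ∈ Icc (max 0 (-τ x)) (min (m0 x) (1 - m1 x))}),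
      Integrable (fun x => (1 - π x) * (τ x + e.1 x)) ν := by
    intro e
    have hτm : Measurable τ := by
      have : τ = fun x => m1 x - m0 x := funext hτ
      rw [this]; exact hm1m.sub hm0m
    refine hint _ ((measurable_const.sub hπm).mul (hτm.add e.2.1)) (fun x => ?_)
    have h1 := hπ01 x; have h2 := he01 e x; have h3 := hτb x
    rw [abs_mul]
    have hb1 : |1 - π x| ≤ 1 := by rw [abs_le]; constructor <;> linarith
    have hb2 : |τ x + e.1 x| ≤ 2 := by
      rw [abs_le] at h3 ⊢; constructor <;> linarith
    nlinarith [abs_nonneg (1 - π x), abs_nonneg (τ x + e.1 x)]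
  set eU : {e : 𝓧 → ℝ // Measurable e ∧ ∀ x,
      e x ∈ Icc (max 0 (-τ x)) (min (m0 x) (1 - m1 x))} := ⟨U, hUm, hUmem⟩ with heU
  haveI : Nonempty {e : 𝓧 → ℝ // Measurable e ∧ ∀ x,
      e x ∈ Icc (max 0 (-τ x)) (min (m0 x) (1 - m1 x))} := ⟨eU⟩
  constructor
  · have hle : ∀ (e : {e : 𝓧 → ℝ // Measurable e ∧ ∀ x,
        e x ∈ Icc (max 0 (-τ x)) (min (m0 x) (1 - m1 x))}),
        ∫ x, π x * e.1 x ∂ν ≤ ∫ x, π x * (m0 x + δp x * (1 - m1 x - m0 x)) ∂ν := by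
      intro e
      have hre : ∀ x, π x * (m0 x + δp x * (1 - m1 x - m0 x)) = π x * U x := by
        intro x; rw [hUeq x]
      calc ∫ x, π x * e.1 x ∂ν ≤ ∫ x, π x * eU.1 x ∂ν := by
            refine integral_mono (hint1 e) (hint1 eU) (fun x => ?_)
            exact mul_le_mul_of_nonneg_left (e.2.2 x).2 (hπ01 x).1
        _ = ∫ x, π x * (m0 x + δp x * (1 - m1 x - m0 x)) ∂ν :=
            integral_congr_ae (ae_of_all _ (fun x => (hre x).symm))
    have hbdd : BddAbove (Set.range (fun e : {e : 𝓧 → ℝ // Measurable e ∧ ∀ x,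
        e x ∈ Icc (max 0 (-τ x)) (min (m0 x) (1 - m1 x))} => ∫ x, π x * e.1 x ∂ν)) :=
      ⟨_, Set.forall_mem_range.mpr hle⟩
    refine le_antisymm (ciSup_le hle) ?_
    have := le_ciSup hbdd eU
    refine le_trans (le_of_eq ?_) this
    refine integral_congr_ae (ae_of_all _ (fun x => ?_))
    show π x * (m0 x + δp x * (1 - m1 x - m0 x)) = π x * U x
    rw [hUeq x]
  · have hle : ∀ (e : {e : 𝓧 → ℝ // Measurable e ∧ ∀ x,
        e x ∈ Icc (max 0 (-τ x)) (min (m0 x) (1 - m1 x))}),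
        ∫ x, (1 - π x) * (τ x + e.1 x) ∂ν
          ≤ ∫ x, (1 - π x) * (m1 x + δp x * (1 - m1 x - m0 x)) ∂ν := by
      intro e
      have hre : ∀ x, (1 - π x) * (m1 x + δp x * (1 - m1 x - m0 x))
          = (1 - π x) * (τ x + U x) := by
        intro x; rw [hUeq x, hτ x]; ring
      calc ∫ x, (1 - π x) * (τ x + e.1 x) ∂ν ≤ ∫ x, (1 - π x) * (τ x + eU.1 x) ∂ν := by
            refine integral_mono (hint2 e) (hint2 eU) (fun x => ?_)
            have := (hπ01 x).2
            exact mul_le_mul_of_nonneg_left (by linarith [(e.2.2 x).2]) (by linarith)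
        _ = ∫ x, (1 - π x) * (m1 x + δp x * (1 - m1 x - m0 x)) ∂ν :=
            integral_congr_ae (ae_of_all _ (fun x => (hre x).symm))
    have hbdd : BddAbove (Set.range (fun e : {e : 𝓧 → ℝ // Measurable e ∧ ∀ x,
        e x ∈ Icc (max 0 (-τ x)) (min (m0 x) (1 - m1 x))} =>
        ∫ x, (1 - π x) * (τ x + e.1 x) ∂ν)) :=
      ⟨_, Set.forall_mem_range.mpr hle⟩
    refine le_antisymm (ciSup_le hle) ?_
    have := le_ciSup hbdd eU
    refine le_trans (le_of_eq ?_) this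
    refine integral_congr_ae (ae_of_all _ (fun x => ?_))
    show (1 - π x) * (m1 x + δp x * (1 - m1 x - m0 x)) = (1 - π x) * (τ x + U x)
    rw [hUeq x, hτ x]; ring
end
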